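/- For any digraph D and any message length t, MAIS(D) ≤ β_t(D): the number of vertices in a maximum acyclic induced subdigraph lower-bounds the optimal index code length. -/

import Mathlib

open Finset
open scoped Classical

universe u

variable {V : Type u}

/-- `l` is a directed cycle: nonempty, distinct vertices, consecutive arcs, wrap-around arc. -/
def IsCycle (A : V → V → Prop) (l : List V) : Prop :=
  l ≠ [] ∧ l.Nodup ∧ l.Chain' A ∧
    ∀ a b, l.getLast? = some a → l.head? = some b → A a b

/-- `l` is a directed path from `i` to `j`. -/
def IsPath (A : V → V → Prop) (l : List V) (i j : V) : Prop :=
  l.Nodup ∧ l.Chain' A ∧ l.head? = some i ∧ l.getLast? = some j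

/-- An I-path w.r.t. inner vertex set `VI`: a path between two distinct inner vertices
whose interior vertices are all non-inner. -/
def IsIPath [DecidableEq V] (A : V → V → Prop) (VI : Finset V) (l : List V) (i j : V) : Prop :=
  IsPath A l i j ∧ i ∈ VI ∧ j ∈ VI ∧ i ≠ j ∧ ∀ v ∈ l.dropLast.drop 1, v ∉ VI

/-- An I-cycle: a directed cycle containing exactly one inner vertex. -/
def IsICycle [DecidableEq V] (A : V → V → Prop) (VI : Finset V) (l : List V) : Prop :=
  IsCycle A l ∧ (l.toFinset ∩ VI).card = 1

/-- A K-IC structure: exactly one I-path between each ordered pair of distinct inner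
vertices, and no I-cycle. -/
def IsKIC [DecidableEq V] (A : V → V → Prop) (VI : Finset V) : Prop :=
  (∀ i ∈ VI, ∀ j ∈ VI, i ≠ j → ∃! l : List V, IsIPath A VI l i j) ∧
  ∀ l : List V, ¬ IsICycle A VI l

/-- Out-degree of a vertex. -/
noncomputable def outDeg [Fintype V] (A : V → V → Prop) (v : V) : ℕ :=
  (univ.filter fun w => A v w).card

/-- Minimum out-degree of a digraph. -/
noncomputable def minOutDeg [Fintype V] [Nonempty V] (A : V → V → Prop) : ℕ :=
  univ.inf' univ_nonempty (outDeg A)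

/-- Out-degree of `v` within the subdigraph induced on `s`. -/
noncomputable def outDegOn (A : V → V → Prop) (s : Finset V) (v : V) : ℕ :=
  (s.filter fun w => A v w).card

/-- Minimum out-degree of the subdigraph induced on `s` (0 if `s` is empty). -/
noncomputable def minOutDegOn (A : V → V → Prop) (s : Finset V) : ℕ :=
  if h : s.Nonempty then s.inf' h (outDegOn A s) else 0

/-- Induced arc relation on a vertex subset. -/
def inducedRel (A : V → V → Prop) (s : Finset V) : V → V → Prop :=
  fun u v => u ∈ s ∧ v ∈ s ∧ A u v

/-- A valid index code of length `p` for `t`-bit messages: the messages of every receiver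
are determined by the codeword together with its side information (its out-neighbours'
messages). -/
def IsIndexCode [Fintype V] (A : V → V → Prop) (t p : ℕ)
    (F : (V → (Fin t → ZMod 2)) → (Fin p → ZMod 2)) : Prop :=
  ∀ x y : V → (Fin t → ZMod 2), F x = F y →
    ∀ i : V, (∀ q, A i q → x q = y q) → x i = y i

/-- No directed cycle lies entirely inside `s`. -/
def AcyclicOn (A : V → V → Prop) (s : Finset V) : Prop :=
  ∀ l : List V, IsCycle A l → ¬ (∀ v ∈ l, v ∈ s)

/-- `s` (as a partial clique) is minimal: its savings `δ⁺` strictly exceed the total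
savings of any partition of `s` into at least two parts. -/
def IsMinimalPC [DecidableEq V] (A : V → V → Prop) (s : Finset V) : Prop :=
  ∀ P : Finpartition s, 2 ≤ P.parts.card →
    ∑ p ∈ P.parts, minOutDegOn A p < minOutDegOn A s

/-- A directed rooted tree inside the digraph `A`, rooted at inner vertex `i`, whose
leaves are exactly the other inner vertices and whose internal vertices are non-inner. -/
structure IsICTree [DecidableEq V] (A : V → V → Prop) (VI : Finset V) (i : V)
    (T : V → V → Prop) : Prop where
  sub : ∀ u v, T u v → A u v
  root_mem : i ∈ VI
  root_no_parent : ∀ u, ¬ T u i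
  unique_parent : ∀ u u' v, T u v → T u' v → u = u'
  reach : ∀ j ∈ VI, j ≠ i → Relation.ReflTransGen T i j
  leaf : ∀ j ∈ VI, j ≠ i → ∀ w, ¬ T j w
  connected : ∀ u v, T u v → Relation.ReflTransGen T i u
  acyclic : ∀ v, ¬ Relation.TransGen T v v

/-- The Class-A digraph on `3*m` vertices (`K = 2*m` inner vertices `0,…,K-1`,
outer vertices `K,…,3m-1`): outer vertex `K+i` has arcs to inner `2i` and `2i+1`;
inner `2i` and `2i+1` have mutual arcs and arcs to every outer vertex except `K+i`. -/
def classARel (m : ℕ) : Fin (3 * m) → Fin (3 * m) → Prop := fun u v =>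
  (2 * m ≤ u.val ∧ v.val < 2 * m ∧ v.val / 2 = u.val - 2 * m) ∨
  (u.val < 2 * m ∧ v.val < 2 * m ∧ u.val / 2 = v.val / 2 ∧ u ≠ v) ∨
  (u.val < 2 * m ∧ 2 * m ≤ v.val ∧ v.val - 2 * m ≠ u.val / 2)


lemma dup_decomp {x : V} {l : List V} (h : List.Duplicate x l) :
    ∃ l₁ l₂ l₃ : List V, l = l₁ ++ x :: l₂ ++ x :: l₃ := by
  induction h with
  | cons_mem hm =>
    obtain ⟨s, t, rfl⟩ := List.mem_iff_append.mp hm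
    exact ⟨[], s, t, by simp⟩
  | @cons_duplicate y l' _ ih =>
    obtain ⟨l₁, l₂, l₃, rfl⟩ := ih
    exact ⟨y :: l₁, l₂, l₃, by simp⟩

lemma transGen_walk {r : V → V → Prop} {a b : V} (h : Relation.TransGen r a b) :
    ∃ l : List V, List.Chain' r (a :: l ++ [b]) := by
  induction h with
  | single h => exact ⟨[], List.isChain_pair.mpr h⟩
  | @tail b' c' _ hbc ih =>
    obtain ⟨l, hl⟩ := ih
    refine ⟨l ++ [b'], ?_⟩
    rw [show (a :: (l ++ [b']) ++ [c']) = (a :: l ++ [b']) ++ [c'] by simp]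
    refine List.IsChain.append hl (List.isChain_singleton _) ?_
    intro x hx y hy
    simp at hy
    subst hy
    rw [show a :: l ++ [b'] = (a :: l) ++ [b'] from rfl, List.getLast?_concat] at hx
    obtain rfl : b' = x := by simpa using hx
    exact hbc

lemma shrink_walk {r : V → V → Prop} :
    ∀ (n : ℕ) (m : List V), m.length ≤ n → m ≠ [] → List.Chain' r m →
      (∀ a b, m.getLast? = some a → m.head? = some b → r a b) →
      ∃ c : List V, c ≠ [] ∧ c.Nodup ∧ List.Chain' r c ∧
        (∀ a b, c.getLast? = some a → c.head? = some b → r a b) := by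
  intro n
  induction n with
  | zero => intro m hlen hne _ _; exact absurd (List.eq_nil_of_length_eq_zero (Nat.le_zero.mp hlen)) hne
  | succ n ih =>
    intro m hlen hne hch hwrap
    by_cases hnd : m.Nodup
    · exact ⟨m, hne, hnd, hch, hwrap⟩
    · obtain ⟨x, hx⟩ := List.exists_duplicate_iff_not_nodup.mpr hnd
      obtain ⟨l₁, l₂, l₃, rfl⟩ := dup_decomp hx
      have hinfix : (x :: l₂ ++ [x]) <:+: (l₁ ++ x :: l₂ ++ x :: l₃) :=
        ⟨l₁, l₃, by simp⟩
      have hch2 : List.Chain' r (x :: l₂ ++ [x]) := hch.infix hinfix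
      have hsplit := List.isChain_append.mp hch2
      refine ih (x :: l₂) ?_ (by simp) hsplit.1 ?_
      · have : (l₁ ++ x :: l₂ ++ x :: l₃).length ≤ n + 1 := hlen
        simp only [List.length_append, List.length_cons] at this ⊢
        omega
      · intro a b ha hb
        simp only [List.head?_cons, Option.some.injEq] at hb
        subst hb
        exact hsplit.2.2 a ha x (by simp)

lemma walk_mem {A : V → V → Prop} {S : Finset V} :
    ∀ (m : List V) (w z : V), List.Chain' (inducedRel A S) m → m.getLast? = some w →
      inducedRel A S w z → ∀ v ∈ m, v ∈ S := by
  intro m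
  induction m with
  | nil => intro _ _ _ _ _ v hv; simp at hv
  | cons x tl ih =>
    intro w z hch hlast hwz v hv
    cases tl with
    | nil =>
      simp at hlast hv
      subst hlast; subst hv
      exact hwz.1
    | cons y tl' =>
      rw [show List.Chain' (inducedRel A S) (x :: y :: tl') ↔ _ from List.isChain_cons_cons] at hch
      rcases List.mem_cons.mp hv with rfl | hv'
      · exact hch.1.1
      · exact ih w z hch.2 (by simpa using hlast) hwz v hv'

lemma irrefl_transGen_induced {A : V → V → Prop} {S : Finset V} (hS : AcyclicOn A S) :
    ∀ v : V, ¬ Relation.TransGen (inducedRel A S) v v := by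
  intro v hv
  obtain ⟨l, hl⟩ := transGen_walk hv
  -- closed walk m = v :: l with wrap edge
  have hm : List.Chain' (inducedRel A S) (v :: l) :=
    hl.prefix ⟨[v], by simp⟩
  have hwrapm : ∀ a b, (v :: l).getLast? = some a → (v :: l).head? = some b →
      inducedRel A S a b := by
    intro a b ha hb
    simp only [List.head?_cons, Option.some.injEq] at hb
    subst hb
    have := (List.isChain_append.mp (show List.Chain' (inducedRel A S) ((v :: l) ++ [v]) from hl)).2.2
    exact this a ha v (by simp)
  obtain ⟨c, hcne, hcnd, hcch, hcwrap⟩ :=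
    shrink_walk (v :: l).length (v :: l) le_rfl (by simp) hm hwrapm
  -- c is a cycle entirely in S
  obtain ⟨w, hw⟩ := List.getLast?_isSome.mpr hcne |> Option.isSome_iff_exists.mp
  obtain ⟨b, hb⟩ := List.isSome_head?.mpr hcne |> Option.isSome_iff_exists.mp
  have hwb := hcwrap w b hw hb
  have hcyc : IsCycle A c :=
    ⟨hcne, hcnd, List.IsChain.imp (fun a b h => h.2.2) hcch, fun a b' ha hb' => (hcwrap a b' ha hb').2.2⟩
  exact hS c hcyc (walk_mem c w b hcch hw hwb)

/-- MAIS lower bound: any vertex set inducing an acyclic subdigraph forces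
`|S| · t ≤ p` for every valid index code; hence MAIS(D) ≤ β_t(D). -/
theorem stmt11 {V : Type u} [Fintype V] [DecidableEq V] (A : V → V → Prop)
    (t p : ℕ) (ht : 1 ≤ t)
    (F : (V → (Fin t → ZMod 2)) → (Fin p → ZMod 2)) (hF : IsIndexCode A t p F)
    (S : Finset V) (hS : AcyclicOn A S) :
    S.card * t ≤ p := by
  classical
  set r := inducedRel A S with hr
  have hirr : ∀ v, ¬ Relation.TransGen r v v := irrefl_transGen_induced hS
  have hwf : WellFounded (fun a b : V => Relation.TransGen r b a) := by
    have ht' : IsTrans V (fun a b : V => Relation.TransGen r b a) :=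
      ⟨fun a b c h1 h2 => h2.trans h1⟩
    have hi : IsIrrefl V (fun a b : V => Relation.TransGen r b a) := ⟨fun a h => hirr a h⟩
    exact Finite.wellFounded_of_trans_of_irrefl _
  let ext : (S → Fin t → ZMod 2) → V → Fin t → ZMod 2 :=
    fun g v => if hv : v ∈ S then g ⟨v, hv⟩ else 0
  have hinj : Function.Injective (fun g : (S → Fin t → ZMod 2) => F (ext g)) := by
    intro g h he
    have key : ∀ v, ext g v = ext h v := by
      intro v
      induction v using hwf.induction with
      | _ v ihv =>
        by_cases hv : v ∈ S
        · refine hF (ext g) (ext h) he v ?_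
          intro q hq
          by_cases hqS : q ∈ S
          · exact ihv q (Relation.TransGen.single ⟨hv, hqS, hq⟩)
          · show ext g q = ext h q
            simp only [ext, dif_neg hqS]
        · show ext g v = ext h v
          simp only [ext, dif_neg hv]
    funext ⟨v, hv⟩ i
    have := key v
    simpa only [ext, dif_pos hv] using congrFun this i
  have h1 : (2:ℕ)^(S.card * t) ≤ 2^p := by
    calc (2:ℕ)^(S.card * t) = Fintype.card ((↥S) → Fin t → ZMod 2) := by
          rw [Fintype.card_fun, Fintype.card_fun, Fintype.card_coe, ZMod.card,
            Fintype.card_fin, ← pow_mul, Nat.mul_comm]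
      _ ≤ Fintype.card (Fin p → ZMod 2) := Fintype.card_le_of_injective (fun g => F (ext g)) hinj
      _ = 2^p := by rw [Fintype.card_fun, ZMod.card, Fintype.card_fin]
  exact (Nat.pow_le_pow_iff_right (by norm_num)).mp h1
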